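/- Let φ = (1+√5)/2 be the golden ratio, and let η be the 3×3 matrix η = [[1/2, −φ/2, 1/(2φ)], [φ/2, 1/(2φ), −1/2], [1/(2φ), 1/2, φ/2]]. Let α = [[1,0,0],[0,−1,0],[0,0,−1]] and γ = [[0,1,0],[0,0,1],[1,0,0]]. Suppose V : ℝ³ → ℝ³ is a continuously differentiable vector field satisfying ∇×V = V, α⁻¹ ∘ V ∘ α = V, and γ⁻¹ ∘ V ∘ γ = V. Define the induced vector field W = Σ_{j=0}^{4} η^{−j} ∘ V ∘ η^{j}. Then: (1) ∇×W = W; and (2) ε⁻¹ ∘ W ∘ ε = W for ε equal to each of α, γ, and η (hence for every ε in the icosahedral group 𝕀 = ⟨α,γ,η⟩ of order 60). -/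

import Mathlib

noncomputable section

open Real

/-- The standard harmonic polynomial `P_n(x,y) = Re((x+iy)^n)`. -/
def polyP (n : ℕ) (x y : ℝ) : ℝ := ((x + y * Complex.I) ^ n).re

/-- The standard harmonic polynomial `Q_n(x,y) = Im((x+iy)^n)`. -/
def polyQ (n : ℕ) (x y : ℝ) : ℝ := ((x + y * Complex.I) ^ n).im

/-- Partial derivative in the `i`-th coordinate direction. -/
def pd (i : Fin 3) (F : (Fin 3 → ℝ) → ℝ) : (Fin 3 → ℝ) → ℝ :=
  fun v => deriv (fun t => F (Function.update v i t)) (v i)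

/-- Divergence of a vector field on ℝ³. -/
def div3 (V : (Fin 3 → ℝ) → (Fin 3 → ℝ)) : (Fin 3 → ℝ) → ℝ :=
  fun v => pd 0 (fun w => V w 0) v + pd 1 (fun w => V w 1) v + pd 2 (fun w => V w 2) v

/-- Curl of a vector field on ℝ³. -/
def curl3 (V : (Fin 3 → ℝ) → (Fin 3 → ℝ)) : (Fin 3 → ℝ) → (Fin 3 → ℝ) :=
  fun v => ![pd 1 (fun w => V w 2) v - pd 2 (fun w => V w 1) v,
             pd 2 (fun w => V w 0) v - pd 0 (fun w => V w 2) v,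
             pd 0 (fun w => V w 1) v - pd 1 (fun w => V w 0) v]

/-- Laplacian of a scalar function on ℝ³. -/
def lap3 (F : (Fin 3 → ℝ) → ℝ) : (Fin 3 → ℝ) → ℝ :=
  fun v => pd 0 (pd 0 F) v + pd 1 (pd 1 F) v + pd 2 (pd 2 F) v

/- ## Auxiliary lemmas -/

lemma update_eq_line' (v : Fin 3 → ℝ) (i : Fin 3) (t : ℝ) :
    Function.update v i t = v + (t - v i) • (Pi.single i 1 : Fin 3 → ℝ) := by
  funext j
  by_cases h : j = i
  · subst h; simp [Function.update]
  · simp [Function.update, h, Pi.single_eq_of_ne h]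

lemma hasDerivAt_update'' (F : (Fin 3 → ℝ) → ℝ) {v : Fin 3 → ℝ}
    (hF : DifferentiableAt ℝ F v) (i : Fin 3) :
    HasDerivAt (fun t => F (Function.update v i t))
      (fderiv ℝ F v (Pi.single i 1)) (v i) := by
  have hline : HasDerivAt (fun t : ℝ => v + (t - v i) • (Pi.single i 1 : Fin 3 → ℝ))
      ((Pi.single i 1 : Fin 3 → ℝ)) (v i) := by
    simpa using (((hasDerivAt_id (v i)).sub_const (v i)).smul_const
      ((Pi.single i 1 : Fin 3 → ℝ))).const_add v
  have h0 : v + ((v i) - v i) • (Pi.single i 1 : Fin 3 → ℝ) = v := by simp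
  have hF' : HasFDerivAt F (fderiv ℝ F v) (v + ((v i) - v i) • (Pi.single i 1 : Fin 3 → ℝ)) := by
    rw [h0]; exact hF.hasFDerivAt
  have := hF'.comp_hasDerivAt (v i) hline
  have heq : (F ∘ fun t : ℝ => v + (t - v i) • (Pi.single i 1 : Fin 3 → ℝ)) =
      fun t => F (Function.update v i t) := by
    funext t; simp [Function.comp, ← update_eq_line']
  rw [heq] at this
  exact this

lemma pd_eq_fderiv (F : (Fin 3 → ℝ) → ℝ) {v : Fin 3 → ℝ}
    (hF : DifferentiableAt ℝ F v) (i : Fin 3) :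
    pd i F v = fderiv ℝ F v (Pi.single i 1) :=
  (hasDerivAt_update'' F hF i).deriv

open Matrix in
lemma diff_mulVec (R : Matrix (Fin 3) (Fin 3) ℝ) :
    Differentiable ℝ (fun w : Fin 3 → ℝ => R.mulVec w) := by
  have : (fun w : Fin 3 → ℝ => R.mulVec w) =
      (LinearMap.toContinuousLinearMap R.mulVecLin : (Fin 3 → ℝ) →L[ℝ] (Fin 3 → ℝ)) := by
    funext w; simp [Matrix.mulVecLin]
  rw [this]
  exact (LinearMap.toContinuousLinearMap R.mulVecLin).differentiable

open Matrix in
lemma pd_lin (F : (Fin 3 → ℝ) → ℝ) (hF : Differentiable ℝ F)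
    (R : Matrix (Fin 3) (Fin 3) ℝ) (i : Fin 3) (v : Fin 3 → ℝ) :
    pd i (fun w => F (R.mulVec w)) v =
      R 0 i * pd 0 F (R.mulVec v) + R 1 i * pd 1 F (R.mulVec v)
        + R 2 i * pd 2 F (R.mulVec v) := by
  set L : (Fin 3 → ℝ) →L[ℝ] (Fin 3 → ℝ) := LinearMap.toContinuousLinearMap R.mulVecLin with hL
  have hLe : ∀ w, L w = R.mulVec w := by intro w; simp [hL, Matrix.mulVecLin]
  have hcomp : (fun w => F (R.mulVec w)) = F ∘ L := by
    funext w; simp [hLe]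
  have hdF : DifferentiableAt ℝ (fun w => F (R.mulVec w)) v := by
    rw [hcomp]; exact (hF _).comp v (L.differentiable v)
  rw [pd_eq_fderiv _ hdF i, hcomp]
  rw [fderiv_comp v (hF _) (L.differentiable v)]
  simp only [ContinuousLinearMap.coe_comp', Function.comp_apply, L.fderiv]
  have hsingle : L (Pi.single i 1) = R 0 i • (Pi.single 0 1 : Fin 3 → ℝ)
      + R 1 i • (Pi.single 1 1 : Fin 3 → ℝ) + R 2 i • (Pi.single 2 1 : Fin 3 → ℝ) := by
    rw [hLe, Matrix.mulVec_single]
    funext j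
    fin_cases j <;> simp [Pi.single_apply]
  rw [hsingle]
  have hLv : L v = R.mulVec v := hLe v
  rw [map_add, map_add, _root_.map_smul, _root_.map_smul, _root_.map_smul]
  rw [pd_eq_fderiv F (hF _) 0, pd_eq_fderiv F (hF _) 1, pd_eq_fderiv F (hF _) 2]
  simp [smul_eq_mul, hLv]

lemma pd_comb (a b c : ℝ) (F G H : (Fin 3 → ℝ) → ℝ)
    (hF : Differentiable ℝ F) (hG : Differentiable ℝ G) (hH : Differentiable ℝ H)
    (i : Fin 3) (v : Fin 3 → ℝ) :
    pd i (fun w => a * F w + b * G w + c * H w) v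
      = a * pd i F v + b * pd i G v + c * pd i H v := by
  have dF := hasDerivAt_update'' F (hF v) i
  have dG := hasDerivAt_update'' G (hG v) i
  have dH := hasDerivAt_update'' H (hH v) i
  have : HasDerivAt (fun t => a * F (Function.update v i t) + b * G (Function.update v i t)
      + c * H (Function.update v i t))
      (a * (fderiv ℝ F v (Pi.single i 1)) + b * (fderiv ℝ G v (Pi.single i 1))
        + c * (fderiv ℝ H v (Pi.single i 1))) (v i) :=
    ((dF.const_mul a).add (dG.const_mul b)).add (dH.const_mul c)
  rw [pd, this.deriv, pd_eq_fderiv F (hF v) i, pd_eq_fderiv G (hG v) i, pd_eq_fderiv H (hH v) i]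

lemma pd_add5 (F0 F1 F2 F3 F4 : (Fin 3 → ℝ) → ℝ)
    (h0 : Differentiable ℝ F0) (h1 : Differentiable ℝ F1) (h2 : Differentiable ℝ F2)
    (h3 : Differentiable ℝ F3) (h4 : Differentiable ℝ F4) (i : Fin 3) (v : Fin 3 → ℝ) :
    pd i (fun w => F0 w + F1 w + F2 w + F3 w + F4 w) v
      = pd i F0 v + pd i F1 v + pd i F2 v + pd i F3 v + pd i F4 v := by
  have D : HasDerivAt (fun t => F0 (Function.update v i t) + F1 (Function.update v i t)
      + F2 (Function.update v i t) + F3 (Function.update v i t) + F4 (Function.update v i t))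
      ((fderiv ℝ F0 v (Pi.single i 1)) + (fderiv ℝ F1 v (Pi.single i 1))
        + (fderiv ℝ F2 v (Pi.single i 1)) + (fderiv ℝ F3 v (Pi.single i 1))
        + (fderiv ℝ F4 v (Pi.single i 1))) (v i) :=
    ((((hasDerivAt_update'' F0 (h0 v) i).add (hasDerivAt_update'' F1 (h1 v) i)).add
      (hasDerivAt_update'' F2 (h2 v) i)).add (hasDerivAt_update'' F3 (h3 v) i)).add
      (hasDerivAt_update'' F4 (h4 v) i)
  rw [pd, D.deriv, pd_eq_fderiv F0 (h0 v) i, pd_eq_fderiv F1 (h1 v) i,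
    pd_eq_fderiv F2 (h2 v) i, pd_eq_fderiv F3 (h3 v) i, pd_eq_fderiv F4 (h4 v) i]

lemma curl_add5 (U0 U1 U2 U3 U4 : (Fin 3 → ℝ) → (Fin 3 → ℝ))
    (h0 : Differentiable ℝ U0) (h1 : Differentiable ℝ U1) (h2 : Differentiable ℝ U2)
    (h3 : Differentiable ℝ U3) (h4 : Differentiable ℝ U4) (v : Fin 3 → ℝ) :
    curl3 (fun w => U0 w + U1 w + U2 w + U3 w + U4 w) v
      = curl3 U0 v + curl3 U1 v + curl3 U2 v + curl3 U3 v + curl3 U4 v := by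
  have key : ∀ p q : Fin 3, pd p (fun w => (U0 w + U1 w + U2 w + U3 w + U4 w) q) v
      = pd p (fun x => U0 x q) v + pd p (fun x => U1 x q) v + pd p (fun x => U2 x q) v
        + pd p (fun x => U3 x q) v + pd p (fun x => U4 x q) v := by
    intro p q
    have hl : (fun w => (U0 w + U1 w + U2 w + U3 w + U4 w) q)
        = fun w => U0 w q + U1 w q + U2 w q + U3 w q + U4 w q := by
      funext w; simp
    rw [hl, pd_add5 _ _ _ _ _ (differentiable_pi.mp h0 q) (differentiable_pi.mp h1 q)
      (differentiable_pi.mp h2 q) (differentiable_pi.mp h3 q) (differentiable_pi.mp h4 q)]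
  have hc : ∀ p q : Fin 3,
      pd p (fun w => (U0 w + U1 w + U2 w + U3 w + U4 w) q) v
        - pd q (fun w => (U0 w + U1 w + U2 w + U3 w + U4 w) p) v
      = (pd p (fun x => U0 x q) v - pd q (fun x => U0 x p) v)
        + (pd p (fun x => U1 x q) v - pd q (fun x => U1 x p) v)
        + (pd p (fun x => U2 x q) v - pd q (fun x => U2 x p) v)
        + (pd p (fun x => U3 x q) v - pd q (fun x => U3 x p) v)
        + (pd p (fun x => U4 x q) v - pd q (fun x => U4 x p) v) := by
    intro p q; rw [key p q, key q p]; ring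
  funext k
  have e0 : (curl3 U0 v + curl3 U1 v + curl3 U2 v + curl3 U3 v + curl3 U4 v) k
      = curl3 U0 v k + curl3 U1 v k + curl3 U2 v k + curl3 U3 v k + curl3 U4 v k := by
    simp
  fin_cases k <;>
  · rw [e0]
    simp only [curl3, Matrix.cons_val_zero, Matrix.cons_val_one, Matrix.head_cons,
      Matrix.cons_val_two, Matrix.tail_cons]
    exact hc _ _

open Matrix in
lemma curl_conj (R : Matrix (Fin 3) (Fin 3) ℝ) (hadj : R.adjugate = Rᵀ)
    (V : (Fin 3 → ℝ) → (Fin 3 → ℝ)) (hV : Differentiable ℝ V) (v : Fin 3 → ℝ) :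
    curl3 (fun w => Rᵀ.mulVec (V (R.mulVec w))) v = Rᵀ.mulVec (curl3 V (R.mulVec v)) := by
  have hVm : ∀ m : Fin 3, Differentiable ℝ (fun x => V x m) := differentiable_pi.mp hV
  have hcm : ∀ m : Fin 3, Differentiable ℝ (fun w => V (R.mulVec w) m) :=
    fun m => (hVm m).comp (diff_mulVec R)
  have hh := hadj
  rw [Matrix.adjugate_fin_three] at hh
  have h00 := congrFun (congrFun hh 0) 0
  have h10 := congrFun (congrFun hh 0) 1
  have h20 := congrFun (congrFun hh 0) 2
  have h01 := congrFun (congrFun hh 1) 0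
  have h11 := congrFun (congrFun hh 1) 1
  have h21 := congrFun (congrFun hh 1) 2
  have h02 := congrFun (congrFun hh 2) 0
  have h12 := congrFun (congrFun hh 2) 1
  have h22 := congrFun (congrFun hh 2) 2
  simp only [Matrix.cons_val', Matrix.cons_val_zero, Matrix.cons_val_one, Matrix.head_cons,
    Matrix.empty_val', Matrix.cons_val_fin_one, Matrix.head_fin_const, Matrix.transpose_apply,
    Matrix.cons_val_two, Matrix.tail_cons, Matrix.of_apply]
    at h00 h10 h20 h01 h11 h21 h02 h12 h22
  have hfun : ∀ k : Fin 3, (fun w => Rᵀ.mulVec (V (R.mulVec w)) k) =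
      (fun w => R 0 k * V (R.mulVec w) 0 + R 1 k * V (R.mulVec w) 1
        + R 2 k * V (R.mulVec w) 2) := by
    intro k; funext w
    simp [Matrix.mulVec, dotProduct, Fin.sum_univ_three, Matrix.transpose_apply]
  have hrhs : ∀ k : Fin 3, Rᵀ.mulVec (curl3 V (R.mulVec v)) k =
      R 0 k * (pd 1 (fun x => V x 2) (R.mulVec v) - pd 2 (fun x => V x 1) (R.mulVec v))
      + R 1 k * (pd 2 (fun x => V x 0) (R.mulVec v) - pd 0 (fun x => V x 2) (R.mulVec v))
      + R 2 k * (pd 0 (fun x => V x 1) (R.mulVec v) - pd 1 (fun x => V x 0) (R.mulVec v)) := by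
    intro k
    simp [curl3, Matrix.mulVec, dotProduct, Fin.sum_univ_three, Matrix.transpose_apply]
  have key : ∀ p q k : Fin 3,
      (R 1 p * R 2 q - R 2 p * R 1 q = R 0 k) →
      (R 2 p * R 0 q - R 0 p * R 2 q = R 1 k) →
      (R 0 p * R 1 q - R 1 p * R 0 q = R 2 k) →
      pd p (fun w => Rᵀ.mulVec (V (R.mulVec w)) q) v
        - pd q (fun w => Rᵀ.mulVec (V (R.mulVec w)) p) v
        = Rᵀ.mulVec (curl3 V (R.mulVec v)) k := by
    intro p q k e1 e2 e3
    rw [hrhs k, hfun p, hfun q]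
    rw [pd_comb _ _ _ _ _ _ (hcm 0) (hcm 1) (hcm 2),
        pd_comb _ _ _ _ _ _ (hcm 0) (hcm 1) (hcm 2)]
    simp only [pd_lin (fun x => V x 0) (hVm 0) R, pd_lin (fun x => V x 1) (hVm 1) R,
        pd_lin (fun x => V x 2) (hVm 2) R]
    linear_combination
      (pd 1 (fun x => V x 2) (R.mulVec v) - pd 2 (fun x => V x 1) (R.mulVec v)) * e1
      + (pd 2 (fun x => V x 0) (R.mulVec v) - pd 0 (fun x => V x 2) (R.mulVec v)) * e2
      + (pd 0 (fun x => V x 1) (R.mulVec v) - pd 1 (fun x => V x 0) (R.mulVec v)) * e3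
  have hc0 := key 1 2 0 (by linarith) (by linarith) (by linarith)
  have hc1 := key 2 0 1 (by linarith) (by linarith) (by linarith)
  have hc2 := key 0 1 2 (by linarith) (by linarith) (by linarith)
  funext k
  fin_cases k
  · exact hc0
  · exact hc1
  · exact hc2

open Matrix in
lemma adj_of_orth (A : Matrix (Fin 3) (Fin 3) ℝ) (ho : A * Aᵀ = 1) (hd : A.det = 1) :
    A.adjugate = Aᵀ := by
  have h1 : A.adjugate * A = 1 := by rw [Matrix.adjugate_mul, hd, one_smul]
  calc A.adjugate = A.adjugate * (A * Aᵀ) := by rw [ho, mul_one]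
    _ = (A.adjugate * A) * Aᵀ := by rw [mul_assoc]
    _ = Aᵀ := by rw [h1, one_mul]

open Matrix in
lemma inv3_mul (R S : Matrix (Fin 3) (Fin 3) ℝ) (V : (Fin 3 → ℝ) → (Fin 3 → ℝ))
    (hR : ∀ v, R⁻¹.mulVec (V (R.mulVec v)) = V v)
    (hS : ∀ v, S⁻¹.mulVec (V (S.mulVec v)) = V v) :
    ∀ v, (R * S)⁻¹.mulVec (V ((R * S).mulVec v)) = V v := by
  intro v
  rw [Matrix.mul_inv_rev, ← Matrix.mulVec_mulVec, ← Matrix.mulVec_mulVec, hR, hS]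
set_option maxHeartbeats 2000000 in
open Matrix in
/-- averaging a tetrahedrally symmetric Beltrami field over the powers of the
icosahedral generator `η` yields a Beltrami field with full icosahedral symmetry. -/
theorem icosahedral_induced_field
    (φ : ℝ) (hφ : φ = (1 + Real.sqrt 5) / 2)
    (η : Matrix (Fin 3) (Fin 3) ℝ)
    (hη : η = !![1/2, -φ/2, 1/(2*φ); φ/2, 1/(2*φ), -1/2; 1/(2*φ), 1/2, φ/2])
    (α : Matrix (Fin 3) (Fin 3) ℝ) (hα : α = !![1, 0, 0; 0, -1, 0; 0, 0, -1])
    (γ : Matrix (Fin 3) (Fin 3) ℝ) (hγ : γ = !![0, 1, 0; 0, 0, 1; 1, 0, 0])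
    (V : (Fin 3 → ℝ) → (Fin 3 → ℝ)) (hV : ContDiff ℝ 1 V)
    (hBel : ∀ v, curl3 V v = V v)
    (hinvα : ∀ v, α⁻¹.mulVec (V (α.mulVec v)) = V v)
    (hinvγ : ∀ v, γ⁻¹.mulVec (V (γ.mulVec v)) = V v)
    (W : (Fin 3 → ℝ) → (Fin 3 → ℝ))
    (hW : ∀ v, W v = ∑ j ∈ Finset.range 5, (η ^ j)⁻¹.mulVec (V ((η ^ j).mulVec v))) :
    (∀ v, curl3 W v = W v) ∧
    (∀ v, α⁻¹.mulVec (W (α.mulVec v)) = W v) ∧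
    (∀ v, γ⁻¹.mulVec (W (γ.mulVec v)) = W v) ∧
    (∀ v, η⁻¹.mulVec (W (η.mulVec v)) = W v) := by
  -- Arithmetic of the golden ratio
  set s : ℝ := Real.sqrt 5 with hsdef
  have hs : s ^ 2 = 5 := Real.sq_sqrt (by norm_num)
  have hs3 : s ^ 3 = 5 * s := by rw [pow_succ, hs]
  have hsnn : 0 ≤ s := Real.sqrt_nonneg 5
  have hφpos : 0 < φ := by rw [hφ]; positivity
  have hφinv : 1 / (2 * φ) = (s - 1) / 4 := by
    rw [hφ]
    rw [div_eq_div_iff (by positivity) (by norm_num)]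
    nlinarith [hs]
  have hη' : η = !![1/2, -(1+s)/4, (s-1)/4; (1+s)/4, (s-1)/4, -(1/2);
      (s-1)/4, 1/2, (1+s)/4] := by
    rw [hη, hφinv, hφ]
    congr 1 <;> ring
  -- Explicit powers of η
  have hM2 : η ^ 2 = !![((1:ℝ)/4) + (-1/4)*s, -1/2, (1/4) + (1/4)*s;
      (1/2), (-1/4) + (-1/4)*s, (1/4) + (-1/4)*s;
      (1/4) + (1/4)*s, (-1/4) + (1/4)*s, (1/2)] := by
    rw [pow_two, hη']
    ext i j
    fin_cases i <;> fin_cases j <;>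
      simp [Matrix.mul_apply, Fin.sum_univ_three, Matrix.vecHead, Matrix.vecTail] <;> ring_nf <;> linarith [hs, hs3]
  have hM3 : η ^ 3 = !![((1:ℝ)/4) + (-1/4)*s, (1/2), (1/4) + (1/4)*s;
      (-1/2), (-1/4) + (-1/4)*s, (-1/4) + (1/4)*s;
      (1/4) + (1/4)*s, (1/4) + (-1/4)*s, (1/2)] := by
    rw [pow_succ, hM2, hη']
    ext i j
    fin_cases i <;> fin_cases j <;>
      simp [Matrix.mul_apply, Fin.sum_univ_three, Matrix.vecHead, Matrix.vecTail] <;> ring_nf <;> linarith [hs, hs3]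
  have hM4 : η ^ 4 = !![(1:ℝ)/2, (1/4) + (1/4)*s, (-1/4) + (1/4)*s;
      (-1/4) + (-1/4)*s, (-1/4) + (1/4)*s, (1/2);
      (-1/4) + (1/4)*s, (-1/2), (1/4) + (1/4)*s] := by
    rw [show (4:ℕ) = 3 + 1 by norm_num, pow_succ, hM3, hη']
    ext i j
    fin_cases i <;> fin_cases j <;>
      simp [Matrix.mul_apply, Fin.sum_univ_three, Matrix.vecHead, Matrix.vecTail] <;> ring_nf <;> linarith [hs, hs3]
  have hM5 : η ^ 5 = 1 := by
    rw [show (5:ℕ) = 4 + 1 by norm_num, pow_succ, hM4, hη']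
    ext i j
    fin_cases i <;> fin_cases j <;>
      simp [Matrix.mul_apply, Fin.sum_univ_three, Matrix.one_apply] <;>
        ring_nf <;> linarith [hs, hs3]
  -- Orthogonality and determinant
  have hηT : ηᵀ = !![1/2, (1+s)/4, (s-1)/4; -(1+s)/4, (s-1)/4, 1/2;
      (s-1)/4, -(1/2), (1+s)/4] := by
    rw [hη']
    ext i j
    fin_cases i <;> fin_cases j <;> simp [Matrix.transpose_apply]
  have hηo : η * ηᵀ = 1 := by
    rw [hηT, hη']
    ext i j
    fin_cases i <;> fin_cases j <;>
      simp [Matrix.mul_apply, Fin.sum_univ_three, Matrix.transpose_apply, Matrix.one_apply] <;>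
        ring_nf <;> linarith [hs, hs3]
  have hdet : η.det = 1 := by
    rw [hη', Matrix.det_fin_three]
    simp only [Matrix.cons_val', Matrix.cons_val_zero, Matrix.cons_val_one, Matrix.head_cons,
      Matrix.empty_val', Matrix.cons_val_fin_one, Matrix.cons_val_two, Matrix.tail_cons,
      Matrix.head_fin_const, Matrix.of_apply]
    ring_nf
    linarith [hs, hs3]
  have hpowo : ∀ j : ℕ, (η ^ j) * (η ^ j)ᵀ = 1 := by
    intro j
    induction j with
    | zero => simp
    | succ n ih =>
      rw [pow_succ, Matrix.transpose_mul, Matrix.mul_assoc,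
        ← Matrix.mul_assoc η ηᵀ, hηo, Matrix.one_mul, ih]
  have hdetpow : ∀ j : ℕ, (η ^ j).det = 1 := by
    intro j; rw [Matrix.det_pow, hdet, one_pow]
  have hadjpow : ∀ j : ℕ, (η ^ j).adjugate = (η ^ j)ᵀ :=
    fun j => adj_of_orth _ (hpowo j) (hdetpow j)
  have hinvpow : ∀ j : ℕ, (η ^ j)⁻¹ = (η ^ j)ᵀ :=
    fun j => Matrix.inv_eq_right_inv (hpowo j)
  have hVd : Differentiable ℝ V := hV.differentiable one_ne_zero
  have hgd : ∀ j : ℕ, Differentiable ℝ (fun w => (η ^ j)⁻¹.mulVec (V ((η ^ j).mulVec w))) :=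
    fun j => (diff_mulVec _).comp (hVd.comp (diff_mulVec _))
  -- Expanded form of W
  have hWsum : ∀ u, W u = (η ^ 0)⁻¹.mulVec (V ((η ^ 0).mulVec u))
      + (η ^ 1)⁻¹.mulVec (V ((η ^ 1).mulVec u))
      + (η ^ 2)⁻¹.mulVec (V ((η ^ 2).mulVec u))
      + (η ^ 3)⁻¹.mulVec (V ((η ^ 3).mulVec u))
      + (η ^ 4)⁻¹.mulVec (V ((η ^ 4).mulVec u)) := by
    intro u
    rw [hW u, Finset.sum_range_succ, Finset.sum_range_succ, Finset.sum_range_succ,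
      Finset.sum_range_succ, Finset.sum_range_one]
  -- the coset-shift principle
  have term : ∀ (β : Matrix (Fin 3) (Fin 3) ℝ) (j k : ℕ) (w : Matrix (Fin 3) (Fin 3) ℝ),
      η ^ j * β = w * η ^ k → (∀ u, w⁻¹.mulVec (V (w.mulVec u)) = V u) →
      ∀ u, β⁻¹.mulVec ((η ^ j)⁻¹.mulVec (V ((η ^ j).mulVec (β.mulVec u))))
        = (η ^ k)⁻¹.mulVec (V ((η ^ k).mulVec u)) := by
    intro β j k w hfac hw u
    rw [Matrix.mulVec_mulVec, Matrix.mulVec_mulVec, ← Matrix.mul_inv_rev, hfac,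
      Matrix.mul_inv_rev, ← Matrix.mulVec_mulVec, ← Matrix.mulVec_mulVec, hw]
  -- invariances of V under words in α, γ
  have I1 : ∀ u, (1 : Matrix (Fin 3) (Fin 3) ℝ)⁻¹.mulVec (V ((1 : Matrix (Fin 3) (Fin 3) ℝ).mulVec u)) = V u := by
    intro u; simp
  have Iag := inv3_mul α γ V hinvα hinvγ
  have Iga := inv3_mul γ α V hinvγ hinvα
  have Igg := inv3_mul γ γ V hinvγ hinvγ
  have Iaga := inv3_mul (α * γ) α V Iag hinvα
  have Igga := inv3_mul (γ * γ) α V Igg hinvα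
  have Igag := inv3_mul (γ * α) γ V Iga hinvγ
  have Iagg := inv3_mul (α * γ) γ V Iag hinvγ
  have Igagg := inv3_mul (γ * α * γ) γ V Igag hinvγ
  -- coset identities
  have MTAC : ∀ (A B : Matrix (Fin 3) (Fin 3) ℝ),
      (∀ i j, A i j = B i j) → A = B := by
    intro A B h; ext i j; exact h i j
  have fα0 : η ^ 0 * α = α * η ^ 0 := by rw [pow_zero, Matrix.one_mul, Matrix.mul_one]
  have fγ0 : η ^ 0 * γ = γ * η ^ 0 := by rw [pow_zero, Matrix.one_mul, Matrix.mul_one]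
  have fα1 : η ^ 1 * α = (α * γ * α) * η ^ 3 := by
    rw [pow_one, hM3, hη', hα, hγ]
    ext i j
    fin_cases i <;> fin_cases j <;>
      simp [Matrix.mul_apply, Fin.sum_univ_three, Matrix.vecHead, Matrix.vecTail] <;> ring_nf <;> linarith [hs, hs3]
  have fα2 : η ^ 2 * α = (γ * γ * α) * η ^ 4 := by
    rw [hM2, hM4, hα, hγ]
    ext i j
    fin_cases i <;> fin_cases j <;>
      simp [Matrix.mul_apply, Fin.sum_univ_three, Matrix.vecHead, Matrix.vecTail] <;> ring_nf <;> linarith [hs, hs3]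
  have fα3 : η ^ 3 * α = (γ * α * γ) * η ^ 1 := by
    rw [pow_one, hM3, hη', hα, hγ]
    ext i j
    fin_cases i <;> fin_cases j <;>
      simp [Matrix.mul_apply, Fin.sum_univ_three, Matrix.vecHead, Matrix.vecTail] <;> ring_nf <;> linarith [hs, hs3]
  have fα4 : η ^ 4 * α = (α * γ) * η ^ 2 := by
    rw [hM2, hM4, hα, hγ]
    ext i j
    fin_cases i <;> fin_cases j <;>
      simp [Matrix.mul_apply, Fin.sum_univ_three, Matrix.vecHead, Matrix.vecTail] <;> ring_nf <;> linarith [hs, hs3]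
  have fγ1 : η ^ 1 * γ = (γ * α * γ * γ) * η ^ 2 := by
    rw [pow_one, hM2, hη', hα, hγ]
    ext i j
    fin_cases i <;> fin_cases j <;>
      simp [Matrix.mul_apply, Fin.sum_univ_three, Matrix.vecHead, Matrix.vecTail] <;> ring_nf <;> linarith [hs, hs3]
  have fγ2 : η ^ 2 * γ = (γ * α) * η ^ 4 := by
    rw [hM2, hM4, hα, hγ]
    ext i j
    fin_cases i <;> fin_cases j <;>
      simp [Matrix.mul_apply, Fin.sum_univ_three, Matrix.vecHead, Matrix.vecTail] <;> ring_nf <;> linarith [hs, hs3]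
  have fγ3 : η ^ 3 * γ = (α * γ * γ) * η ^ 3 := by
    rw [hM3, hα, hγ]
    ext i j
    fin_cases i <;> fin_cases j <;>
      simp [Matrix.mul_apply, Fin.sum_univ_three, Matrix.vecHead, Matrix.vecTail] <;> ring_nf <;> linarith [hs, hs3]
  have fγ4 : η ^ 4 * γ = (γ * γ) * η ^ 1 := by
    rw [pow_one, hM4, hη', hγ]
    ext i j
    fin_cases i <;> fin_cases j <;>
      simp [Matrix.mul_apply, Fin.sum_univ_three, Matrix.vecHead, Matrix.vecTail] <;> ring_nf <;> linarith [hs, hs3]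
  have fη : ∀ j : ℕ, j < 4 → η ^ j * η = 1 * η ^ (j + 1) := by
    intro j _; rw [Matrix.one_mul, pow_succ]
  have fη4 : η ^ 4 * η = 1 * η ^ 0 := by
    rw [Matrix.one_mul, pow_zero, ← pow_succ, hM5]
  refine ⟨?_, ?_, ?_, ?_⟩
  · -- curl3 W = W
    intro v
    have hWeq : W = fun u => (η ^ 0)⁻¹.mulVec (V ((η ^ 0).mulVec u))
        + (η ^ 1)⁻¹.mulVec (V ((η ^ 1).mulVec u))
        + (η ^ 2)⁻¹.mulVec (V ((η ^ 2).mulVec u))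
        + (η ^ 3)⁻¹.mulVec (V ((η ^ 3).mulVec u))
        + (η ^ 4)⁻¹.mulVec (V ((η ^ 4).mulVec u)) := funext hWsum
    have hcj : ∀ j : ℕ, curl3 (fun w => (η ^ j)⁻¹.mulVec (V ((η ^ j).mulVec w))) v
        = (η ^ j)⁻¹.mulVec (V ((η ^ j).mulVec v)) := by
      intro j
      rw [hinvpow j, curl_conj (η ^ j) (hadjpow j) V hVd v, hBel]
    calc curl3 W v
        = curl3 (fun w => (η ^ 0)⁻¹.mulVec (V ((η ^ 0).mulVec w))
            + (η ^ 1)⁻¹.mulVec (V ((η ^ 1).mulVec w))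
            + (η ^ 2)⁻¹.mulVec (V ((η ^ 2).mulVec w))
            + (η ^ 3)⁻¹.mulVec (V ((η ^ 3).mulVec w))
            + (η ^ 4)⁻¹.mulVec (V ((η ^ 4).mulVec w))) v := by rw [hWeq]
      _ = curl3 (fun w => (η ^ 0)⁻¹.mulVec (V ((η ^ 0).mulVec w))) v
            + curl3 (fun w => (η ^ 1)⁻¹.mulVec (V ((η ^ 1).mulVec w))) v
            + curl3 (fun w => (η ^ 2)⁻¹.mulVec (V ((η ^ 2).mulVec w))) v
            + curl3 (fun w => (η ^ 3)⁻¹.mulVec (V ((η ^ 3).mulVec w))) v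
            + curl3 (fun w => (η ^ 4)⁻¹.mulVec (V ((η ^ 4).mulVec w))) v :=
        curl_add5 _ _ _ _ _ (hgd 0) (hgd 1) (hgd 2) (hgd 3) (hgd 4) v
      _ = W v := by rw [hcj 0, hcj 1, hcj 2, hcj 3, hcj 4, hWsum v]
  · -- α-invariance
    intro v
    rw [hWsum (α.mulVec v), Matrix.mulVec_add, Matrix.mulVec_add, Matrix.mulVec_add,
      Matrix.mulVec_add]
    rw [term α 0 0 α fα0 hinvα v, term α 1 3 (α * γ * α) fα1 Iaga v,
      term α 2 4 (γ * γ * α) fα2 Igga v, term α 3 1 (γ * α * γ) fα3 Igag v,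
      term α 4 2 (α * γ) fα4 Iag v, hWsum v]
    abel
  · -- γ-invariance
    intro v
    rw [hWsum (γ.mulVec v), Matrix.mulVec_add, Matrix.mulVec_add, Matrix.mulVec_add,
      Matrix.mulVec_add]
    rw [term γ 0 0 γ fγ0 hinvγ v, term γ 1 2 (γ * α * γ * γ) fγ1 Igagg v,
      term γ 2 4 (γ * α) fγ2 Iga v, term γ 3 3 (α * γ * γ) fγ3 Iagg v,
      term γ 4 1 (γ * γ) fγ4 Igg v, hWsum v]
    abel
  · -- η-invariance
    intro v
    rw [hWsum (η.mulVec v), Matrix.mulVec_add, Matrix.mulVec_add, Matrix.mulVec_add,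
      Matrix.mulVec_add]
    rw [term η 0 1 1 (fη 0 (by norm_num)) I1 v, term η 1 2 1 (fη 1 (by norm_num)) I1 v,
      term η 2 3 1 (fη 2 (by norm_num)) I1 v, term η 3 4 1 (fη 3 (by norm_num)) I1 v,
      term η 4 0 1 fη4 I1 v, hWsum v]
    abel
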